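/- For D > 0, W > 0, γ > 0, the implicitly defined function τ(τ₀) given by τ₀ = (τ/γ)(2^{D/(W·τ)} − 1) is convex and strictly decreasing in τ₀ on its domain (D·ln 2/(W·γ), ∞). -/

import Mathlib

open Real Set

private lemma aux_deriv1 (c : ℝ) {x : ℝ} (hx : 0 < x) :
    HasDerivAt (fun τ : ℝ => τ * (Real.exp (c / τ) - 1))
      (Real.exp (c / x) * (1 - c / x) - 1) x := by
  have hx' : x ≠ 0 := hx.ne'
  have h1 : HasDerivAt (fun τ : ℝ => c / τ) (-(c / x ^ 2)) x := by
    have := (hasDerivAt_inv hx').const_mul c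
    simpa [div_eq_mul_inv, mul_comm, mul_left_comm] using this
  have h2 : HasDerivAt (fun τ : ℝ => Real.exp (c / τ) - 1)
      (Real.exp (c / x) * (-(c / x ^ 2))) x := (h1.exp).sub_const 1
  have h3 := (hasDerivAt_id x).mul h2
  apply h3.congr_deriv
  simp only [id]
  field_simp
  ring

private lemma aux_deriv2 (c : ℝ) {x : ℝ} (hx : 0 < x) :
    HasDerivAt (fun τ : ℝ => Real.exp (c / τ) * (1 - c / τ) - 1)
      (Real.exp (c / x) * (c ^ 2 / x ^ 3)) x := by
  have hx' : x ≠ 0 := hx.ne'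
  have h1 : HasDerivAt (fun τ : ℝ => c / τ) (-(c / x ^ 2)) x := by
    have := (hasDerivAt_inv hx').const_mul c
    simpa [div_eq_mul_inv, mul_comm, mul_left_comm] using this
  have h2 : HasDerivAt (fun τ : ℝ => Real.exp (c / τ))
      (Real.exp (c / x) * (-(c / x ^ 2))) x := h1.exp
  have h4 : HasDerivAt (fun τ : ℝ => 1 - c / τ) (c / x ^ 2) x := by
    simpa using h1.const_sub 1
  have h5 := (h2.mul h4).sub_const 1
  apply h5.congr_deriv
  field_simp
  ring

private lemma aux_g1_neg (c : ℝ) (hc : 0 < c) {x : ℝ} (hx : 0 < x) :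
    Real.exp (c / x) * (1 - c / x) - 1 < 0 := by
  set u := c / x with hu
  have hu0 : 0 < u := div_pos hc hx
  have h1 : -u + 1 < Real.exp (-u) := Real.add_one_lt_exp (by linarith : -u ≠ 0)
  have h2 : Real.exp u * Real.exp (-u) = 1 := by
    rw [← Real.exp_add]; simp
  have h3 : 0 < Real.exp u := Real.exp_pos u
  nlinarith

private lemma g_props (c : ℝ) (hc : 0 < c) :
    StrictAntiOn (fun τ : ℝ => τ * (Real.exp (c / τ) - 1)) (Set.Ioi 0) ∧
    ConvexOn ℝ (Set.Ioi 0) (fun τ : ℝ => τ * (Real.exp (c / τ) - 1)) := by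
  set g : ℝ → ℝ := fun τ => τ * (Real.exp (c / τ) - 1) with hg
  have hdiff : ∀ x ∈ Set.Ioi (0 : ℝ), DifferentiableAt ℝ g x :=
    fun x hx => (aux_deriv1 c hx).differentiableAt
  have hderiv : ∀ x ∈ Set.Ioi (0 : ℝ),
      deriv g x = Real.exp (c / x) * (1 - c / x) - 1 :=
    fun x hx => (aux_deriv1 c hx).deriv
  have hcont : ContinuousOn g (Set.Ioi 0) :=
    fun x hx => (hdiff x hx).continuousAt.continuousWithinAt
  have hIoi : interior (Set.Ioi (0 : ℝ)) = Set.Ioi 0 := interior_Ioi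
  have heq : ∀ x ∈ Set.Ioi (0 : ℝ),
      deriv g =ᶠ[nhds x] fun τ => Real.exp (c / τ) * (1 - c / τ) - 1 := by
    intro x hx
    filter_upwards [isOpen_Ioi.mem_nhds hx] with y hy using hderiv y hy
  constructor
  · apply strictAntiOn_of_deriv_neg (convex_Ioi 0) hcont
    intro x hx
    rw [hIoi] at hx
    rw [hderiv x hx]
    exact aux_g1_neg c hc hx
  · apply convexOn_of_deriv2_nonneg (convex_Ioi 0) hcont
    · rw [hIoi]; exact fun x hx => (hdiff x hx).differentiableWithinAt
    · rw [hIoi]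
      intro x hx
      have : DifferentiableAt ℝ (deriv g) x :=
        (aux_deriv2 c hx).differentiableAt.congr_of_eventuallyEq (heq x hx)
      exact this.differentiableWithinAt
    · rw [hIoi]
      intro x hx
      have h1 : deriv (deriv g) x = Real.exp (c / x) * (c ^ 2 / x ^ 3) := by
        rw [Filter.EventuallyEq.deriv_eq (heq x hx)]
        exact (aux_deriv2 c hx).deriv
      have : deriv^[2] g x = deriv (deriv g) x := by
        simp [Function.iterate_succ, Function.comp]
      rw [this, h1]
      have hx0 : (0:ℝ) < x := hx
      positivity

/-- The implicitly defined minimum transmission time `τ(τ₀)`, satisfying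
`τ₀ = (τ(τ₀)/γ)(2^{D/(W·τ(τ₀))} − 1)`, is strictly decreasing and convex on its
domain `(D·ln 2/(W·γ), ∞)`. -/
theorem stmt_16 (D W γ : ℝ) (hD : 0 < D) (hW : 0 < W) (hγ : 0 < γ)
    (t : ℝ → ℝ)
    (ht : ∀ τ₀ ∈ Set.Ioi (D * Real.log 2 / (W * γ)), 0 < t τ₀ ∧
      τ₀ = (t τ₀ / γ) * ((2 : ℝ) ^ (D / (W * t τ₀)) - 1)) :
    StrictAntiOn t (Set.Ioi (D * Real.log 2 / (W * γ))) ∧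
    ConvexOn ℝ (Set.Ioi (D * Real.log 2 / (W * γ))) t := by
  set L := D * Real.log 2 / (W * γ) with hL
  set c := D * Real.log 2 / W with hc
  have hlog2 : 0 < Real.log 2 := Real.log_pos (by norm_num)
  have hc0 : 0 < c := by positivity
  set g : ℝ → ℝ := fun τ => τ * (Real.exp (c / τ) - 1) with hg
  obtain ⟨gsa, gcv⟩ := g_props c hc0
  -- key: for τ₀ in the domain, g (t τ₀) = γ * τ₀
  have key : ∀ τ₀ ∈ Set.Ioi L, g (t τ₀) = γ * τ₀ := by
    intro τ₀ hτ₀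
    obtain ⟨hpos, heq⟩ := ht τ₀ hτ₀
    set A := t τ₀ with hA
    have h2 : (2 : ℝ) ^ (D / (W * A)) = Real.exp (c / A) := by
      rw [Real.rpow_def_of_pos (by norm_num : (0:ℝ) < 2)]
      congr 1
      rw [hc]
      field_simp
    show A * (Real.exp (c / A) - 1) = γ * τ₀
    rw [← h2, heq]
    field_simp
  constructor
  · intro x hx y hy hxy
    have hgx : g (t x) = γ * x := key x hx
    have hgy : g (t y) = γ * y := key y hy
    have hpx : 0 < t x := (ht x hx).1
    have hpy : 0 < t y := (ht y hy).1
    have hlt : g (t x) < g (t y) := by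
      rw [hgx, hgy]
      exact (mul_lt_mul_iff_right₀ hγ).mpr hxy
    rcases lt_trichotomy (t y) (t x) with h | h | h
    · exact h
    · exact absurd hlt (by rw [h]; exact lt_irrefl _)
    · exact absurd (gsa (Set.mem_Ioi.mpr hpx) (Set.mem_Ioi.mpr hpy) h) (not_lt.mpr hlt.le)
  · refine ⟨convex_Ioi L, ?_⟩
    intro x hx y hy a b ha hb hab
    have hz : a • x + b • y ∈ Set.Ioi L := (convex_Ioi L) hx hy ha hb hab
    set z := a • x + b • y with hzdef
    have hpx : 0 < t x := (ht x hx).1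
    have hpy : 0 < t y := (ht y hy).1
    have hpz : 0 < t z := (ht z hz).1
    have hm : 0 < a * t x + b * t y := by
      rcases ha.lt_or_eq with ha' | ha'
      · have : 0 ≤ b * t y := mul_nonneg hb hpy.le
        nlinarith
      · have hb1 : b = 1 := by linarith
        simp [← ha', hb1, hpy]
    have hcvx := gcv.2 (Set.mem_Ioi.mpr hpx) (Set.mem_Ioi.mpr hpy) ha hb hab
    have hrhs : a • g (t x) + b • g (t y) = γ * z := by
      rw [key x hx, key y hy, hzdef]
      simp [smul_eq_mul]
      ring
    rw [hrhs, ← key z hz] at hcvx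
    -- hcvx : g (a • t x + b • t y) ≤ g (t z)
    have hmem1 : a • t x + b • t y ∈ Set.Ioi (0:ℝ) := by
      simpa [smul_eq_mul] using hm
    by_contra hcon
    push_neg at hcon
    have h5 : g (t z) < g (a • t x + b • t y) := by
      apply gsa hmem1 (Set.mem_Ioi.mpr hpz)
      simpa [smul_eq_mul] using hcon
    have h6 : g (a • t x + b • t y) ≤ g (t z) := hcvx
    exact absurd h6 (not_le.mpr h5)
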